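/- For ω_max ∈ (π, 2π), the set {exp(i·ω) : ω ∈ [0, ω_max]} equals the set of unit-modulus complex numbers z satisfying Re(z) + tan(ω_max/2)·Im(z) ≤ 1. -/

import Mathlib

open Real

theorem stmt_18 (ωmax : ℝ) (h1 : π < ωmax) (h2 : ωmax < 2 * π) :
    {z : ℂ | ∃ ω ∈ Set.Icc (0 : ℝ) ωmax, z = Complex.exp (Complex.I * ω)} =
      {z : ℂ | ‖z‖ = 1 ∧ z.re + Real.tan (ωmax / 2) * z.im ≤ 1} := by
  have hπ := Real.pi_pos
  set θ := ωmax / 2 with hθdef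
  have hθ1 : π / 2 < θ := by rw [hθdef]; linarith
  have hθ2 : θ < π := by rw [hθdef]; linarith
  have hωeq : ωmax = 2 * θ := by rw [hθdef]; ring
  have hc : Real.cos θ < 0 := Real.cos_neg_of_pi_div_two_lt_of_lt hθ1 (by linarith)
  have key : ∀ ω : ℝ, (Real.cos ω + Real.tan θ * Real.sin ω ≤ 1) ↔
      Real.cos θ ≤ Real.cos (ω - θ) := by
    intro ω
    rw [Real.cos_sub, Real.tan_eq_sin_div_cos]
    have hcn : Real.cos θ ≠ 0 := hc.ne
    constructor
    · intro h
      have := mul_le_mul_of_nonpos_right h hc.le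
      have hsc : Real.sin θ / Real.cos θ * Real.sin ω * Real.cos θ
          = Real.sin θ * Real.sin ω := by field_simp
      nlinarith [this]
    · intro h
      have h2' : (Real.cos ω * Real.cos θ + Real.sin ω * Real.sin θ) * (Real.cos θ)⁻¹
          ≤ Real.cos θ * (Real.cos θ)⁻¹ := by
        apply mul_le_mul_of_nonpos_right h (by
          exact inv_nonpos.mpr hc.le)
      rw [mul_inv_cancel₀ hcn] at h2'
      calc Real.cos ω + Real.sin θ / Real.cos θ * Real.sin ω
          = (Real.cos ω * Real.cos θ + Real.sin ω * Real.sin θ) * (Real.cos θ)⁻¹ := by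
            field_simp
        _ ≤ 1 := h2'
  ext z
  simp only [Set.mem_setOf_eq]
  constructor
  · rintro ⟨ω, ⟨hω0, hωm⟩, rfl⟩
    rw [mul_comm]
    refine ⟨Complex.norm_exp_ofReal_mul_I ω, ?_⟩
    rw [Complex.exp_ofReal_mul_I_re, Complex.exp_ofReal_mul_I_im, key]
    rw [← Real.cos_abs (ω - θ)]
    apply Real.cos_le_cos_of_nonneg_of_le_pi (abs_nonneg _) hθ2.le
    rw [abs_le]
    constructor <;> linarith
  · rintro ⟨habs, hineq⟩
    have hz0 : z ≠ 0 := by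
      intro h; rw [h] at habs; simp at habs
    have hre : z.re = Real.cos z.arg := by
      rw [Complex.cos_arg hz0, habs, div_one]
    have him : z.im = Real.sin z.arg := by
      rw [Complex.sin_arg, habs, div_one]
    have hz : z = Complex.exp (Complex.I * z.arg) := by
      conv_lhs => rw [← Complex.norm_mul_exp_arg_mul_I z]
      rw [habs, mul_comm Complex.I]; simp
    have harg := Complex.arg_mem_Ioc z
    obtain ⟨hal, hau⟩ := harg
    rcases le_or_gt 0 z.arg with ha0 | ha0
    · exact ⟨z.arg, ⟨ha0, by linarith⟩, hz⟩
    · refine ⟨z.arg + 2 * π, ⟨by linarith, ?_⟩, ?_⟩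
      · -- show z.arg + 2π ≤ ωmax
        by_contra hcon
        push_neg at hcon
        rw [hre, him, key] at hineq
        set ω := z.arg + 2 * π with hωdef
        have hcos : Real.cos (z.arg - θ) = Real.cos (ω - θ) := by
          rw [hωdef, show z.arg + 2 * π - θ = (z.arg - θ) + 2 * π by ring,
            Real.cos_add_two_pi]
        rw [hcos] at hineq
        have hω1 : 2 * θ < ω := by linarith
        have hω2 : ω < 2 * π := by rw [hωdef]; linarith
        have hlt : Real.cos (ω - θ) < Real.cos θ := by
          rcases le_or_gt (ω - θ) π with hle | hgt
          · exact Real.cos_lt_cos_of_nonneg_of_le_pi (by linarith) hle (by linarith)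
          · have : Real.cos (ω - θ) = Real.cos (2 * π - (ω - θ)) := by
              rw [show (2 * π - (ω - θ)) = -(ω - θ) + 2 * π by ring,
                Real.cos_add_two_pi, Real.cos_neg]
            rw [this]
            exact Real.cos_lt_cos_of_nonneg_of_le_pi (by linarith) (by linarith)
              (by linarith)
        linarith
      · push_cast
        rw [mul_add, Complex.exp_add,
          show Complex.I * (2 * ↑π) = 2 * ↑π * Complex.I by ring,
          Complex.exp_two_pi_mul_I, mul_one]
        exact hz
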